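/- arXiv:2407.17697 — 3 statements merged into one kernel-verified Lean document; each statement's English description precedes it below -/
import Mathlib

section
/- For c > 2, the Logarithmic Loss is not superior: there exist a probability vector x whose arg max equals the true class and a probability vector q whose arg max differs from the true class such that S_LL(x, i) ≥ S_LL(q, i), i.e., the correct prediction does not receive a strictly better (smaller) score. -/
/-- For `c > 2`, the Logarithmic Loss is not superior: there exist a true class `i`,
a probability vector `x` correctly classified (its arg max is `i`) and a probability
vector `q` misclassified (its arg max is not `i`) such that the correct prediction
does not receive a strictly smaller score: `-log (x i) ≥ -log (q i)`. -/
theorem logloss_not_superior (c : ℕ) (hc : 2 < c) :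
    ∃ (i : Fin c) (x q : Fin c → ℝ),
      (∀ k, 0 ≤ x k) ∧ (∑ k, x k = 1) ∧
      (∀ k, 0 ≤ q k) ∧ (∑ k, q k = 1) ∧
      (∀ k, k ≠ i → x k < x i) ∧
      (∃ k, q i < q k) ∧
      -Real.log (x i) ≥ -Real.log (q i) := by
  have h0 : (0 : ℕ) < c := by omega
  have h1 : (1 : ℕ) < c := by omega
  set i0 : Fin c := ⟨0, h0⟩
  set i1 : Fin c := ⟨1, h1⟩
  set i2 : Fin c := ⟨2, hc⟩
  have h01 : i0 ≠ i1 := by simp [i0, i1, Fin.ext_iff]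
  have h02 : i0 ≠ i2 := by simp [i0, i2, Fin.ext_iff]
  have h12 : i1 ≠ i2 := by simp [i1, i2, Fin.ext_iff]
  refine ⟨i0,
    (fun k => (if k = i0 then (2:ℝ)/5 else 0) + (if k = i1 then 3/10 else 0)
      + (if k = i2 then 3/10 else 0)),
    (fun k => (if k = i0 then (9:ℝ)/20 else 0) + (if k = i1 then 11/20 else 0)),
    ?_, ?_, ?_, ?_, ?_, ?_, ?_⟩
  · intro k; positivity
  · simp only [Finset.sum_add_distrib, Finset.sum_ite_eq' Finset.univ,
      Finset.mem_univ, if_true]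
    norm_num
  · intro k; positivity
  · simp only [Finset.sum_add_distrib, Finset.sum_ite_eq' Finset.univ,
      Finset.mem_univ, if_true]
    norm_num
  · intro k hk
    rcases eq_or_ne k i1 with rfl | hk1
    · norm_num [if_neg h01, if_neg h02, if_neg h12, if_neg hk]
    · rcases eq_or_ne k i2 with rfl | hk2
      · norm_num [if_neg h01, if_neg h02, if_neg (Ne.symm h12), if_neg hk]
      · norm_num [if_neg h01, if_neg h02, if_neg hk, if_neg hk1, if_neg hk2]
  · refine ⟨i1, ?_⟩
    simp only [if_pos rfl, if_neg h01, if_neg (Ne.symm h01)]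
    norm_num
  · simp only [if_pos rfl, if_neg h01, if_neg h02, eq_self_iff_true, if_true]
    have : Real.log ((2:ℝ)/5 + 0 + 0) ≤ Real.log ((9:ℝ)/20 + 0) := by
      apply Real.log_le_log <;> norm_num
    linarith
end

section
/- For c > 2, the Brier Score is not superior: there exist a probability vector x with arg max x equal to the true class i and a probability vector q with arg max q ≠ i such that S_BS(x, i) ≥ S_BS(q, i). In particular, with x and q sharing the same true-class probability α, q can have larger Brier Score dominated by x or vice versa; concretely, for c = 3, i = 2, x = (0.33, 0.34, 0.33) and q = (0.51, 0.49, 0) satisfy S_BS(x, 2) > S_BS(q, 2). -/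
lemma sum3 {c : ℕ} (i a b : Fin c) (hia : i ≠ a) (hib : i ≠ b) (hab : a ≠ b) (A B C : ℝ) :
    ∑ k, (if k = i then A else if k = a then B else if k = b then C else 0) = A + B + C := by
  have h : ∀ k : Fin c, (if k = i then A else if k = a then B else if k = b then C else 0) =
      (if k = i then A else 0) + (if k = a then B else 0) + (if k = b then C else 0) := by
    intro k
    by_cases h1 : k = i <;> by_cases h2 : k = a <;> by_cases h3 : k = b <;> simp_all
  simp [h, Finset.sum_add_distrib]

/-- For `c > 2`, the Brier Score is not superior: there exist a correctly classified
probability vector `x` and a misclassified probability vector `q` with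
`S_BS(x, i) ≥ S_BS(q, i)`.  Concretely, for `c = 3`, true class `2`,
`x = (0.33, 0.34, 0.33)` and `q = (0.51, 0.49, 0)` satisfy `S_BS(x, 2) > S_BS(q, 2)`. -/
theorem brier_not_superior (c : ℕ) (hc : 2 < c) :
    (∃ (i : Fin c) (x q : Fin c → ℝ),
      (∀ k, 0 ≤ x k) ∧ (∑ k, x k = 1) ∧
      (∀ k, 0 ≤ q k) ∧ (∑ k, q k = 1) ∧
      (∀ k, k ≠ i → x k < x i) ∧
      (∃ k, q i < q k) ∧
      ∑ k, (x k - (if k = i then (1 : ℝ) else 0)) ^ 2 ≥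
        ∑ k, (q k - (if k = i then (1 : ℝ) else 0)) ^ 2) ∧
    (∑ k : Fin 3, ((![0.33, 0.34, 0.33] : Fin 3 → ℝ) k - (![0, 1, 0] : Fin 3 → ℝ) k) ^ 2 >
      ∑ k : Fin 3, ((![0.51, 0.49, 0] : Fin 3 → ℝ) k - (![0, 1, 0] : Fin 3 → ℝ) k) ^ 2) := by
  have h0 : 0 < c := by omega
  have h1 : 1 < c := by omega
  set i : Fin c := ⟨0, h0⟩ with hi
  set a : Fin c := ⟨1, h1⟩ with ha
  set b : Fin c := ⟨2, hc⟩ with hb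
  have hia : i ≠ a := by simp [hi, ha, Fin.ext_iff]
  have hib : i ≠ b := by simp [hi, hb, Fin.ext_iff]
  have hab : a ≠ b := by simp [ha, hb, Fin.ext_iff]
  refine ⟨⟨i, (fun k => if k = i then 0.34 else if k = a then 0.33 else if k = b then 0.33 else 0),
    (fun k => if k = i then 0.49 else if k = a then 0.51 else if k = b then 0 else 0),
    ?_, ?_, ?_, ?_, ?_, ?_, ?_⟩, ?_⟩
  · intro k
    by_cases h1 : k = i <;> by_cases h2 : k = a <;> by_cases h3 : k = b <;> simp_all <;> norm_num
  · rw [sum3 i a b hia hib hab]; norm_num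
  · intro k
    by_cases h1 : k = i <;> by_cases h2 : k = a <;> by_cases h3 : k = b <;> simp_all <;> norm_num
  · rw [sum3 i a b hia hib hab]; norm_num
  · intro k hk
    by_cases h2 : k = a <;> by_cases h3 : k = b <;> simp_all <;> norm_num
  · exact ⟨a, by simp [hia.symm, if_neg hia.symm]; norm_num⟩
  · have hx : ∀ k : Fin c,
        ((if k = i then (0.34:ℝ) else if k = a then 0.33 else if k = b then 0.33 else 0)
          - (if k = i then (1 : ℝ) else 0)) ^ 2 =
        (if k = i then ((0.34:ℝ)-1)^2 else if k = a then 0.33^2 else if k = b then 0.33^2 else 0) := by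
      intro k
      by_cases h1 : k = i <;> by_cases h2 : k = a <;> by_cases h3 : k = b <;> simp_all
    have hq : ∀ k : Fin c,
        ((if k = i then (0.49:ℝ) else if k = a then 0.51 else if k = b then 0 else 0)
          - (if k = i then (1 : ℝ) else 0)) ^ 2 =
        (if k = i then ((0.49:ℝ)-1)^2 else if k = a then 0.51^2 else if k = b then 0 else 0) := by
      intro k
      by_cases h1 : k = i <;> by_cases h2 : k = a <;> by_cases h3 : k = b <;> simp_all
    simp only [hx, hq, sum3 i a b hia hib hab]
    norm_num
  · simp [Fin.sum_univ_three]
    norm_num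
end

section
/- The Penalized Brier Score is superior: for any probability vector x with arg max x equal to the true class i (so x_i ≥ 1/c and the penalty is 0) and any probability vector q with arg max q ≠ its true class j, we have S_PBS(x, i) ≤ (c-1)/c < S_PBS(q, j), since S_BS(x, i) ≤ (c-1)/c when x_i ≥ 1/c and S_PBS(q, j) = S_BS(q, j) + (c-1)/c > (c-1)/c whenever q ≠ the one-hot vector at j. -/
/-- Penalized Brier Score of forecast `p` at outcome `i`. -/
noncomputable def SPBS (c : ℕ) (p : Fin c → ℝ) (i : Fin c) : ℝ :=
  ∑ j, (p j - (if j = i then (1 : ℝ) else 0)) ^ 2 +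
    (if ∀ k, p k ≤ p i then 0 else ((c : ℝ) - 1) / c)

/-- The Penalized Brier Score is superior: a correctly classified prediction `x`
(arg max at the true class `i`) satisfies `S_PBS(x, i) ≤ (c-1)/c`, while a
misclassified prediction `q` (arg max differing from its true class `j`, and `q` not
the one-hot vector at `j`) satisfies `S_PBS(q, j) > (c-1)/c`. -/
theorem PBS_superior (c : ℕ) (hc : 2 ≤ c) (i j : Fin c) (x q : Fin c → ℝ)
    (hx0 : ∀ k, 0 ≤ x k) (hxsum : ∑ k, x k = 1)
    (hxmax : ∀ k, k ≠ i → x k < x i)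
    (hq0 : ∀ k, 0 ≤ q k) (hqsum : ∑ k, q k = 1)
    (hqmis : ∃ k, q j < q k)
    (hqone : q ≠ fun k => if k = j then (1 : ℝ) else 0) :
    SPBS c x i ≤ ((c : ℝ) - 1) / c ∧ ((c : ℝ) - 1) / c < SPBS c q j := by
  have hcR : (0 : ℝ) < c := by positivity
  constructor
  · -- correct case
    have hmax : ∀ k, x k ≤ x i := by
      intro k
      by_cases hk : k = i
      · simp [hk]
      · exact (hxmax k hk).le
    have hxi : 1 / (c : ℝ) ≤ x i := by
      have h1 : (1 : ℝ) ≤ c * x i := by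
        calc (1 : ℝ) = ∑ k, x k := hxsum.symm
        _ ≤ ∑ _k : Fin c, x i := Finset.sum_le_sum fun k _ => hmax k
        _ = c * x i := by simp [mul_comm]
      rw [div_le_iff₀ hcR]
      linarith [h1]
    have hmaxcond : (if ∀ k, x k ≤ x i then (0:ℝ) else ((c : ℝ) - 1) / c) = 0 := by
      simp [hmax]
    rw [SPBS, hmaxcond, add_zero]
    have hsplit : ∑ k, (x k - (if k = i then (1:ℝ) else 0)) ^ 2
        = (x i - 1)^2 + ∑ k ∈ Finset.univ.erase i, (x k)^2 := by
      rw [← Finset.add_sum_erase _ _ (Finset.mem_univ i)]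
      simp only [if_pos rfl]
      congr 1
      apply Finset.sum_congr rfl
      intro k hk
      rw [if_neg (Finset.ne_of_mem_erase hk)]
      ring
    have hrest : ∑ k ∈ Finset.univ.erase i, (x k)^2
        ≤ (1 - x i) * x i := by
      have hsum' : ∑ k ∈ Finset.univ.erase i, x k = 1 - x i := by
        have := Finset.add_sum_erase Finset.univ x (Finset.mem_univ i)
        rw [hxsum] at this
        linarith
      calc ∑ k ∈ Finset.univ.erase i, (x k)^2
          ≤ ∑ k ∈ Finset.univ.erase i, x k * x i := by
            apply Finset.sum_le_sum
            intro k hk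
            have := hmax k
            have := hx0 k
            nlinarith
        _ = (1 - x i) * x i := by rw [← Finset.sum_mul, hsum']
    rw [hsplit]
    have : ((c:ℝ) - 1)/c = 1 - 1/c := by field_simp
    rw [this]
    nlinarith [hxi]
  · -- incorrect case
    have hnmax : ¬ ∀ k, q k ≤ q j := by
      obtain ⟨k, hk⟩ := hqmis
      push_neg
      exact ⟨k, hk⟩
    rw [SPBS, if_neg hnmax]
    have hpos : 0 < ∑ k, (q k - (if k = j then (1:ℝ) else 0)) ^ 2 := by
      have : ∃ k, q k ≠ (if k = j then (1:ℝ) else 0) := by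
        by_contra h
        push_neg at h
        exact hqone (funext h)
      obtain ⟨k, hk⟩ := this
      apply Finset.sum_pos'
      · intro l _; positivity
      · exact ⟨k, Finset.mem_univ k, pow_two_pos_of_ne_zero (sub_ne_zero.mpr hk)⟩
    linarith
end
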